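/- Let p be a non-zero polynomial on ℂⁿ, q a polynomial dividing p in ℂ[z₁,...,zₙ] (p = p₁q with p₁ non-constant vanishing at some point v), and A > 0. Then the evaluation-type functional T_v(fq) = f(v) satisfies the continuity estimate |T_v(fq)| ≤ c_A e^{√n A|v|} ‖fq‖_A for all entire f of exponential type with ‖fq‖_A < ∞, where c_A depends only on q and A. -/

import Mathlib

/-- The Euclidean norm on ℂⁿ. -/
noncomputable def enorm' {n : ℕ} (z : Fin n → ℂ) : ℝ :=
  Real.sqrt (∑ i, ‖z i‖ ^ 2)

lemma enorm'_eq_norm {n : ℕ} (z : Fin n → ℂ) :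
    enorm' z = ‖(WithLp.equiv 2 (Fin n → ℂ)).symm z‖ := by
  rw [EuclideanSpace.norm_eq]
  simp [enorm']

lemma enorm'_nonneg {n : ℕ} (z : Fin n → ℂ) : 0 ≤ enorm' z := Real.sqrt_nonneg _

lemma enorm'_tri {n : ℕ} (v u : Fin n → ℂ) (w : ℂ) :
    enorm' (fun i => v i + w * u i) ≤ enorm' v + ‖w‖ * enorm' u := by
  simp only [enorm'_eq_norm]
  have h : (WithLp.equiv 2 (Fin n → ℂ)).symm (fun i => v i + w * u i)
      = (WithLp.equiv 2 (Fin n → ℂ)).symm v + w • (WithLp.equiv 2 (Fin n → ℂ)).symm u := rfl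
  rw [h]
  refine (norm_add_le _ _).trans ?_
  rw [norm_smul]

theorem stmt_17 {n : ℕ} (p p₁ q : MvPolynomial (Fin n) ℂ) (hp : p ≠ 0)
    (hpfac : p = p₁ * q) (hp₁ : p₁.totalDegree ≠ 0)
    (v : Fin n → ℂ) (hv : MvPolynomial.eval v p₁ = 0) (A : ℝ) (hA : 0 < A) :
    ∃ c : ℝ, 0 < c ∧ ∀ (f : (Fin n → ℂ) → ℂ) (M : ℝ), Differentiable ℂ f →
      (∀ z, ‖MvPolynomial.eval z q * f z‖ ≤ M * Real.exp (A * enorm' z)) →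
      ‖f v‖ ≤ c * Real.exp (Real.sqrt n * A * enorm' v) * M := by
  classical
  have hq0 : q ≠ 0 := by
    rintro rfl
    exact hp (by rw [hpfac, mul_zero])
  obtain ⟨z₀, hz₀⟩ : ∃ z₀, MvPolynomial.eval z₀ q ≠ 0 := by
    by_contra h
    push_neg at h
    exact hq0 (MvPolynomial.funext fun x => by simp [h x])
  set u : Fin n → ℂ := fun i => z₀ i - v i with hu
  set P : Polynomial ℂ := MvPolynomial.aeval
      (fun i => Polynomial.C (v i) + Polynomial.X * Polynomial.C (u i)) q with hP
  have key : ∀ w : ℂ, Polynomial.eval w P = MvPolynomial.eval (fun i => v i + w * u i) q := by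
    intro w
    rw [hP, show (Polynomial.eval w : Polynomial ℂ → ℂ)
        = (Polynomial.aeval w : Polynomial ℂ →ₐ[ℂ] ℂ) from rfl,
      MvPolynomial.comp_aeval_apply, ← MvPolynomial.coe_aeval_eq_eval]
    simp only [map_add, map_mul, Polynomial.aeval_C, Polynomial.aeval_X,
      Algebra.algebraMap_self_apply, RingHom.coe_coe]
  have hPne : P ≠ 0 := by
    intro h
    apply hz₀
    have := key 1
    rw [h] at this
    simpa [hu] using this.symm
  -- radius avoiding roots
  set R : ℝ := 1 + ((P.roots.toFinset.image (fun z => ‖z‖₊)).sup id : NNReal) with hR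
  have hR1 : (1 : ℝ) ≤ R := le_add_of_nonneg_right (by positivity)
  have hRpos : 0 < R := lt_of_lt_of_le one_pos hR1
  have hroot : ∀ w : ℂ, ‖w‖ = R → Polynomial.eval w P ≠ 0 := by
    intro w hw h
    have hmem : w ∈ P.roots.toFinset := by
      simp [Polynomial.mem_roots, hPne, Polynomial.IsRoot, h]
    have : (‖w‖₊ : ℝ) ≤ ((P.roots.toFinset.image (fun z => ‖z‖₊)).sup id : NNReal) := by
      exact_mod_cast Finset.le_sup (f := id) (Finset.mem_image_of_mem _ hmem)
    have hw' : (‖w‖₊ : ℝ) = R := by rw [← hw]; simp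
    rw [hw'] at this
    linarith
  -- minimum of |P| on the sphere
  have hsne : (Metric.sphere (0 : ℂ) R).Nonempty :=
    NormedSpace.sphere_nonempty.mpr hRpos.le
  obtain ⟨w₀, hw₀mem, hw₀min⟩ := (isCompact_sphere (0 : ℂ) R).exists_isMinOn hsne
    (Continuous.continuousOn (by continuity : Continuous fun w => ‖Polynomial.eval w P‖))
  set ε : ℝ := ‖Polynomial.eval w₀ P‖ with hε
  have hεpos : 0 < ε := by
    have : Polynomial.eval w₀ P ≠ 0 :=
      hroot w₀ (by simpa using mem_sphere_zero_iff_norm.mp hw₀mem)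
    simpa [hε] using (norm_pos_iff.mpr this)
  refine ⟨Real.exp (A * (R * enorm' u)) / ε, by positivity, ?_⟩
  intro f M hf hbound
  have hM : 0 ≤ M := by
    have h0 := (norm_nonneg _).trans (hbound z₀)
    exact (mul_nonneg_iff_of_pos_right (Real.exp_pos _)).mp h0
  -- the restricted function
  set g : ℂ → ℂ := fun w => f (fun i => v i + w * u i) with hg
  have hgdiff : Differentiable ℂ g := by
    apply hf.comp
    exact differentiable_pi.mpr fun i =>
      (differentiable_const _).add (differentiable_id.mul (differentiable_const _))
  set C : ℝ := (M / ε) * Real.exp (A * (enorm' v + R * enorm' u)) with hC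
  have hfront : ∀ w ∈ frontier (Metric.ball (0 : ℂ) R), ‖g w‖ ≤ C := by
    intro w hw
    rw [frontier_ball 0 hRpos.ne'] at hw
    have hwR : ‖w‖ = R := by
      simpa using mem_sphere_zero_iff_norm.mp hw
    have h1 : ε * ‖g w‖ ≤ ‖Polynomial.eval w P‖ * ‖g w‖ := by
      exact mul_le_mul_of_nonneg_right (hw₀min hw) (norm_nonneg _)
    have h2 : ‖Polynomial.eval w P‖ * ‖g w‖
        ≤ M * Real.exp (A * (enorm' v + R * enorm' u)) := by
      rw [← norm_mul, key w]
      refine (hbound _).trans ?_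
      apply mul_le_mul_of_nonneg_left _ hM
      apply Real.exp_le_exp.mpr
      apply mul_le_mul_of_nonneg_left _ hA.le
      have := enorm'_tri v u w
      rw [hwR] at this
      exact this
    have := h1.trans h2
    rw [hC]
    rw [div_mul_eq_mul_div, le_div_iff₀ hεpos, mul_comm ‖g w‖ ε] at *
    linarith
  have hmax : ‖g 0‖ ≤ C := by
    refine Complex.norm_le_of_forall_mem_frontier_norm_le Metric.isBounded_ball
      hgdiff.diffContOnCl hfront ?_
    exact subset_closure (Metric.mem_ball_self hRpos)
  have hg0 : g 0 = f v := by simp [hg]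
  rw [hg0] at hmax
  refine hmax.trans ?_
  rw [hC]
  have hAv : A * enorm' v ≤ Real.sqrt n * A * enorm' v := by
    rcases Nat.eq_zero_or_pos n with hn | hn
    · subst hn
      simp [enorm', show (Finset.univ : Finset (Fin 0)) = ∅ from rfl]
    · have h1 : (1 : ℝ) ≤ Real.sqrt n := by
        rw [show (1:ℝ) = Real.sqrt 1 by simp]
        exact Real.sqrt_le_sqrt (by exact_mod_cast hn)
      have h2 := mul_le_mul_of_nonneg_right
        (mul_le_mul_of_nonneg_right h1 hA.le) (enorm'_nonneg v)
      simpa using h2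
  have hsplit : Real.exp (A * (enorm' v + R * enorm' u))
      = Real.exp (A * (R * enorm' u)) * Real.exp (A * enorm' v) := by
    rw [← Real.exp_add]; ring_nf
  rw [hsplit]
  calc M / ε * (Real.exp (A * (R * enorm' u)) * Real.exp (A * enorm' v))
      ≤ M / ε * (Real.exp (A * (R * enorm' u)) * Real.exp (Real.sqrt n * A * enorm' v)) := by
        refine mul_le_mul_of_nonneg_left ?_ (by positivity)
        exact mul_le_mul_of_nonneg_left (Real.exp_le_exp.mpr hAv) (Real.exp_pos _).le
    _ = Real.exp (A * (R * enorm' u)) / ε * Real.exp (Real.sqrt n * A * enorm' v) * M := by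
        ring
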